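/- For each n ≥ 2, the assignment t_i ↦ V_i extends to a group homomorphism ψ_n from the twin group T_n to GL_{n−1}(ℤ[x,y]); equivalently, V_i² = I for all i, and V_i V_j = V_j V_i whenever |i−j| > 1. -/

import Mathlib

open Matrix Polynomial

/-- Deformed Tits matrix `V_i` (generator index `i` is 1-based, `1 ≤ i ≤ m`):
the identity `m × m` matrix except column `i`, which has `-1` on the diagonal,
`y` in row `i-1` and `x` in row `i+1`. -/
def Vmat {R : Type*} [CommRing R] (x y : R) (m i : ℕ) : Matrix (Fin m) (Fin m) R :=
  Matrix.of fun r c =>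
    if (c : ℕ) + 1 = i then
      if (r : ℕ) + 1 = i then -1
      else if (r : ℕ) + 2 = i then y
      else if (r : ℕ) = i then x
      else 0
    else if r = c then 1 else 0

section aux
variable {R : Type*} [CommRing R]

/-- The special column of `Vmat` minus the identity column. -/
def wvec (x y : R) (m i : ℕ) : Fin m → R := fun r =>
  if (r : ℕ) + 1 = i then -2 else if (r : ℕ) + 2 = i then y
  else if (r : ℕ) = i then x else 0

/-- Indicator of column `i - 1`. -/
def dvec (m i : ℕ) : Fin m → R := fun c => if (c : ℕ) + 1 = i then 1 else 0

lemma Vmat_eq (x y : R) (m i : ℕ) :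
    Vmat x y m i = 1 + vecMulVec (wvec x y m i) (dvec (R := R) m i) := by
  ext r c
  simp only [Vmat, Matrix.of_apply, Matrix.add_apply, Matrix.one_apply,
    vecMulVec_apply, wvec, dvec, Fin.ext_iff]
  split_ifs <;> try ring
  all_goals (exfalso; omega)

lemma my_vmv (m : ℕ) (a b c d : Fin m → R) :
    vecMulVec a b * vecMulVec c d = (b ⬝ᵥ c) • vecMulVec a d := by
  ext r s
  simp only [mul_apply, vecMulVec_apply, Matrix.smul_apply, dotProduct, smul_eq_mul,
    Finset.sum_mul]
  apply Finset.sum_congr rfl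
  intro k _
  ring

lemma dot_self (x y : R) (m i : ℕ) (h1 : 1 ≤ i) (h2 : i ≤ m) :
    dvec (R := R) m i ⬝ᵥ wvec x y m i = -2 := by
  have hm : i - 1 < m := by omega
  rw [dotProduct, Finset.sum_eq_single (⟨i - 1, hm⟩ : Fin m)]
  · simp only [dvec, wvec]
    rw [if_pos (show i - 1 + 1 = i by omega), if_pos (show i - 1 + 1 = i by omega)]
    ring
  · intro b _ hb
    have hb' : (b : ℕ) + 1 ≠ i := fun h => hb (Fin.ext (show (b : ℕ) = i - 1 by omega))
    simp [dvec, hb']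
  · simp

lemma dot_zero (x y : R) (m i j : ℕ) (h1 : i ≠ j) (h2 : i + 1 ≠ j) (h3 : i ≠ j + 1) :
    dvec (R := R) m i ⬝ᵥ wvec x y m j = 0 := by
  rw [dotProduct]
  apply Finset.sum_eq_zero
  intro c _
  simp only [dvec, wvec]
  split_ifs <;> try ring
  all_goals (exfalso; omega)

lemma Vmat_sq (x y : R) (m i : ℕ) (h1 : 1 ≤ i) (h2 : i ≤ m) :
    Vmat x y m i * Vmat x y m i = 1 := by
  rw [Vmat_eq, add_mul, mul_add, mul_add, my_vmv, dot_self x y m i h1 h2]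
  simp only [one_mul, mul_one, neg_smul, two_smul, neg_add]
  abel

lemma Vmat_comm (x y : R) (m i j : ℕ) (hij : i + 1 < j) :
    Vmat x y m i * Vmat x y m j = Vmat x y m j * Vmat x y m i := by
  rw [Vmat_eq x y m i, Vmat_eq x y m j, add_mul, mul_add, mul_add, add_mul,
    mul_add, mul_add, my_vmv, my_vmv,
    dot_zero x y m i j (by omega) (by omega) (by omega),
    dot_zero x y m j i (by omega) (by omega) (by omega)]
  simp only [one_mul, mul_one, zero_smul, add_zero]
  abel
end aux

/-- Relators of the twin group with `m` generators (the twin group on `m+1` strands). -/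
def twinRels (m : ℕ) : Set (FreeGroup (Fin m)) :=
  {r | (∃ i, r = FreeGroup.of i * FreeGroup.of i) ∨
       (∃ i j : Fin m, (i : ℕ) + 1 < (j : ℕ) ∧
          r = FreeGroup.of i * FreeGroup.of j * (FreeGroup.of i)⁻¹ * (FreeGroup.of j)⁻¹)}

/-- The twin group `T_{m+1}` on `m+1` strands, with `m` generators `t_1, …, t_m`;
the generator `t_{i+1}` is `TwinGroup.of i` for `i : Fin m`. -/
def TwinGroup (m : ℕ) : Type := PresentedGroup (twinRels m)

instance (m : ℕ) : Group (TwinGroup m) :=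
  inferInstanceAs (Group (PresentedGroup (twinRels m)))

/-- The generator `t_{i+1}` of the twin group. -/
def TwinGroup.of {m : ℕ} (i : Fin m) : TwinGroup m := PresentedGroup.of i

/-- The ring `ℤ[x,y]`. -/
noncomputable abbrev Lam : Type := MvPolynomial (Fin 2) ℤ

/-- The variable `x` of `ℤ[x,y]`. -/
noncomputable def xP : Lam := MvPolynomial.X 0

/-- The variable `y` of `ℤ[x,y]`. -/
noncomputable def yP : Lam := MvPolynomial.X 1

/-- The matrix `V_{i+1}` as an element of `GL`. -/
noncomputable def Vunit (m : ℕ) (i : Fin m) : GL (Fin m) Lam :=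
  ⟨Vmat xP yP m ((i : ℕ) + 1), Vmat xP yP m ((i : ℕ) + 1),
    Vmat_sq _ _ m _ (by omega) (by omega),
    Vmat_sq _ _ m _ (by omega) (by omega)⟩

lemma Vunit_rels (m : ℕ) : ∀ r ∈ twinRels m, FreeGroup.lift (Vunit m) r = 1 := by
  intro r hr
  rcases hr with ⟨i, rfl⟩ | ⟨i, j, hij, rfl⟩
  · simp only [_root_.map_mul, FreeGroup.lift_apply_of]
    refine Units.ext ?_
    simp only [Units.val_mul, Units.val_one, Vunit]
    exact Vmat_sq _ _ m _ (by omega) (by omega)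
  · have hc : Vunit m i * Vunit m j = Vunit m j * Vunit m i := by
      refine Units.ext ?_
      simp only [Units.val_mul, Vunit]
      exact Vmat_comm _ _ m _ _ (by omega)
    simp only [_root_.map_mul, _root_.map_inv, FreeGroup.lift_apply_of]
    rw [hc]
    group

/-- Proposition 3.2: for `n ≥ 2` the assignment `t_i ↦ V_i` extends to a group
homomorphism `ψ_n : T_n → GL_{n-1}(ℤ[x,y])`; equivalently, `V_i² = I` and
`V_i V_j = V_j V_i` for `|i-j| > 1`. -/
theorem stmt1 (n : ℕ) (hn : 2 ≤ n) :
    (∃ ψ : TwinGroup (n-1) →* GL (Fin (n-1)) Lam,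
        ∀ i : Fin (n-1), (ψ (TwinGroup.of i) : Matrix (Fin (n-1)) (Fin (n-1)) Lam)
          = Vmat xP yP (n-1) ((i : ℕ) + 1)) ∧
    (∀ i : ℕ, 1 ≤ i → i ≤ n - 1 →
        Vmat xP yP (n-1) i * Vmat xP yP (n-1) i = 1) ∧
    (∀ i j : ℕ, 1 ≤ i → i + 1 < j → j ≤ n - 1 →
        Vmat xP yP (n-1) i * Vmat xP yP (n-1) j
          = Vmat xP yP (n-1) j * Vmat xP yP (n-1) i) := by
  refine ⟨⟨PresentedGroup.toGroup (Vunit_rels (n-1)), fun i => ?_⟩, ?_, ?_⟩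
  · exact congrArg Units.val (PresentedGroup.toGroup.of (Vunit_rels (n-1)) (x := i))
  · intro i h1 h2
    exact Vmat_sq _ _ _ _ h1 h2
  · intro i j h1 h2 h3
    exact Vmat_comm _ _ _ _ _ h2
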